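/- Let l ≥ 3 and let k : ZMod l → ℤ satisfy k_i ≥ 2 for every i, with k_{i₀} ≥ 3 for at least one index i₀. Let M be the real symmetric l × l matrix indexed by ZMod l defined by M_{ii} = −k_i, M_{ij} = 1 whenever j = i + 1 or j = i − 1 (mod l), and M_{ij} = 0 otherwise. Then M is negative definite. -/

import Mathlib

/-- The intersection matrix of a cycle of `l ≥ 3` rational curves with
self-intersections `−k_i ≤ −2`, at least one of which is `≤ −3`, is negative
definite (i.e. `−M` is positive definite). -/
theorem cycle_intersection_matrix_negative_definite (l : ℕ) (hl : 3 ≤ l) [NeZero l]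
    (k : ZMod l → ℤ) (hk : ∀ i, 2 ≤ k i) (i₀ : ZMod l) (hk₀ : 3 ≤ k i₀)
    (M : Matrix (ZMod l) (ZMod l) ℝ)
    (hM : ∀ i j, M i j =
      if i = j then -(k i : ℝ) else if j = i + 1 ∨ j = i - 1 then 1 else 0) :
    (-M).PosDef := by
  have h1 : (1 : ZMod l) ≠ 0 := by
    have : ((1:ℕ) : ZMod l) ≠ 0 := by
      rw [Ne, ZMod.natCast_eq_zero_iff]
      intro hd
      have := Nat.le_of_dvd one_pos hd
      omega
    simpa using this
  have h2 : (2 : ZMod l) ≠ 0 := by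
    have : ((2:ℕ) : ZMod l) ≠ 0 := by
      rw [Ne, ZMod.natCast_eq_zero_iff]
      intro hd
      have := Nat.le_of_dvd two_pos hd
      omega
    simpa using this
  have hne1 : ∀ i : ZMod l, i ≠ i + 1 := by
    intro i h
    apply h1
    linear_combination -h
  have hne2 : ∀ i : ZMod l, i ≠ i - 1 := by
    intro i h
    apply h1
    linear_combination h
  have hne3 : ∀ i : ZMod l, (i : ZMod l) + 1 ≠ i - 1 := by
    intro i h
    apply h2
    linear_combination h
  -- shift invariance of sums over ZMod l
  have shift : ∀ f : ZMod l → ℝ, ∑ i, f (i + 1) = ∑ i, f i := by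
    intro f
    exact Fintype.sum_equiv (Equiv.addRight (1 : ZMod l)) _ _ (fun i => rfl)
  -- compute mulVec
  have hmv : ∀ (x : ZMod l → ℝ) (i : ZMod l),
      (Matrix.mulVec (-M) x) i = (k i : ℝ) * x i - x (i + 1) - x (i - 1) := by
    intro x i
    have : ∀ j, (-M) i j * x j =
        (if j = i then (k i : ℝ) * x j else 0) +
        ((if j = i + 1 then -x j else 0) + (if j = i - 1 then -x j else 0)) := by
      intro j
      simp only [Matrix.neg_apply, hM]
      by_cases hji : j = i
      · subst hji
        simp [Ne.symm (hne1 j), Ne.symm (hne2 j), (hne1 j), (hne2 j)]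
      · rw [if_neg (fun h => hji h.symm)]
        by_cases ha : j = i + 1
        · subst ha
          simp [hji, hne3 i]
        · by_cases hb : j = i - 1
          · subst hb
            simp [hji, ha]
          · simp [hji, ha, hb]
    simp only [Matrix.mulVec, dotProduct, this, Finset.sum_add_distrib]
    rw [Finset.sum_ite_eq' Finset.univ i, Finset.sum_ite_eq' Finset.univ (i+1),
      Finset.sum_ite_eq' Finset.univ (i-1)]
    simp only [Finset.mem_univ, if_true, sub_eq_add_neg]
    ring
  -- quadratic form identity
  have key : ∀ x : ZMod l → ℝ,
      ∑ i, x i * ((k i : ℝ) * x i - x (i + 1) - x (i - 1)) =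
      ∑ i, (((k i : ℝ) - 2) * x i ^ 2 + (x i - x (i + 1)) ^ 2) := by
    intro x
    have e1 : ∀ i : ZMod l, x i * ((k i : ℝ) * x i - x (i + 1) - x (i - 1)) =
        ((k i : ℝ) * x i ^ 2 - x i * x (i + 1)) - x i * x (i - 1) := fun i => by ring
    have e2 : ∀ i : ZMod l, ((k i : ℝ) - 2) * x i ^ 2 + (x i - x (i + 1)) ^ 2 =
        (((k i : ℝ) * x i ^ 2 - x i * x (i + 1)) - x (i + 1) * x i) +
          (x (i + 1) * x (i + 1) - x i * x i) := fun i => by ring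
    simp only [e1, e2, Finset.sum_sub_distrib, Finset.sum_add_distrib]
    have h3 : ∑ i : ZMod l, x i * x (i - 1) = ∑ i : ZMod l, x (i + 1) * x i := by
      rw [← shift (fun i => x i * x (i - 1))]
      simp
    have h4 : ∑ i : ZMod l, x (i + 1) * x (i + 1) = ∑ i : ZMod l, x i * x i :=
      shift (fun i => x i * x i)
    rw [h3, h4]
    ring
  rw [Matrix.posDef_iff_dotProduct_mulVec]
  constructor
  · -- Hermitian
    rw [Matrix.IsHermitian, Matrix.conjTranspose]
    ext i j
    simp only [Matrix.map_apply, Matrix.transpose_apply, Matrix.neg_apply, star_neg, neg_inj,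
      RCLike.star_def, starRingEnd_apply, star_trivial]
    rw [hM, hM]
    by_cases hij : i = j
    · subst hij; simp
    · rw [if_neg (fun h => hij h.symm), if_neg hij]
      have : (i = j + 1 ∨ i = j - 1) ↔ (j = i + 1 ∨ j = i - 1) := by
        constructor
        · rintro (h | h)
          · right; rw [h]; ring
          · left; rw [h]; ring
        · rintro (h | h)
          · right; rw [h]; ring
          · left; rw [h]; ring
      by_cases hc : j = i + 1 ∨ j = i - 1
      · rw [if_pos (this.mpr hc), if_pos hc]
      · rw [if_neg (fun h => hc (this.mp h)), if_neg hc]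
  · intro x hx
    have hq : ∀ (y : ZMod l → ℝ), dotProduct (star y) (Matrix.mulVec (-M) y) =
        ∑ i, (((k i : ℝ) - 2) * y i ^ 2 + (y i - y (i + 1)) ^ 2) := by
      intro y
      rw [← key y]
      simp only [dotProduct, star_trivial, Pi.star_apply]
      exact Finset.sum_congr rfl fun i _ => by rw [hmv]
    rw [hq]
    have hnn : ∀ i ∈ Finset.univ, (0:ℝ) ≤ ((k i : ℝ) - 2) * x i ^ 2 + (x i - x (i + 1)) ^ 2 := by
      intro i _
      have : (0:ℝ) ≤ ((k i : ℝ) - 2) := by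
        have := hk i
        have : (2:ℝ) ≤ (k i : ℝ) := by exact_mod_cast this
        linarith
      positivity
    by_cases hc : ∀ i : ZMod l, x (i + 1) = x i
    · -- x constant
      have hconst : ∀ a : ZMod l, x a = x i₀ := by
        have hstep : ∀ (n : ℕ) (a : ZMod l), x (a + n) = x a := by
          intro n
          induction n with
          | zero => simp
          | succ m ih =>
            intro a
            have : ((m + 1 : ℕ) : ZMod l) = (m : ZMod l) + 1 := by push_cast; ring
            rw [this, ← add_assoc]
            rw [hc (a + m), ih a]
        intro a
        have : a = i₀ + ((a - i₀).val : ℕ) := by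
          rw [ZMod.natCast_val, ZMod.cast_id]; ring
        rw [this, hstep]
      have hxi₀ : x i₀ ≠ 0 := by
        intro h0
        apply hx
        funext a
        rw [hconst a, h0]; rfl
      apply Finset.sum_pos' hnn
      refine ⟨i₀, Finset.mem_univ _, ?_⟩
      have hk2 : (1:ℝ) ≤ (k i₀ : ℝ) - 2 := by
        have : (3:ℝ) ≤ (k i₀ : ℝ) := by exact_mod_cast hk₀
        linarith
      have hx2 : 0 < x i₀ ^ 2 := by positivity
      nlinarith [sq_nonneg (x i₀ - x (i₀ + 1))]
    · push_neg at hc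
      obtain ⟨i, hi⟩ := hc
      apply Finset.sum_pos' hnn
      refine ⟨i, Finset.mem_univ _, ?_⟩
      have h0 : (0:ℝ) < (x i - x (i + 1)) ^ 2 := by
        have : x i - x (i + 1) ≠ 0 := fun h => hi (by linarith [sub_eq_zero.mp h])
        positivity
      have : (0:ℝ) ≤ ((k i : ℝ) - 2) * x i ^ 2 := by
        have h2r : (2:ℝ) ≤ (k i : ℝ) := by exact_mod_cast hk i
        nlinarith [sq_nonneg (x i)]
      linarith
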